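/- With ϑ₁,...,ϑ_n ∈ [0,1), H_i > 0, Σ H_i = 1, n ≥ 2, and λ_k = [Σ_i (1−ϑ_i)² ϑ_i^{k−1} H_i]/[Σ_i (1−ϑ_i) H_i]: the sequence (λ_k) is geometric (i.e., λ_{k+1}/λ_k is constant in k) if and only if all ϑ_i with (1−ϑ_i)²H_i > 0 are equal. In particular if ϑ₁ ≠ ϑ₂ with ϑ₁, ϑ₂ ∈ (0,1), the limiting cluster distribution is not geometric, hence the compound Poisson law is not Pólya–Aeppli. -/
import Mathlib


/-- With `λ_k = Σ_i (1-ϑ_i)² ϑ_i^{k-1} H_i / Σ_i (1-ϑ_i) H_i` (`ϑ_i ∈ [0,1)`, `H_i > 0`,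
`Σ H_i = 1`, `n ≥ 2`): the sequence `(λ_k)` is geometric iff all the `ϑ_i` with
`(1-ϑ_i)² H_i > 0` are equal; in particular if `ϑ₁ ≠ ϑ₂` with `ϑ₁, ϑ₂ ∈ (0,1)` then
`(λ_k)` is not geometric, so the compound Poisson law is not Pólya–Aeppli. -/
theorem stmt_13 (n : ℕ) (hn : 2 ≤ n) (ϑ H : Fin n → ℝ)
    (hϑ : ∀ i, ϑ i ∈ Set.Ico (0 : ℝ) 1) (hH : ∀ i, 0 < H i) (hHsum : ∑ i, H i = 1)
    (lam : ℕ → ℝ)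
    (hlam : ∀ k, 1 ≤ k →
      lam k = (∑ i, (1 - ϑ i) ^ 2 * ϑ i ^ (k - 1) * H i) / (∑ i, (1 - ϑ i) * H i)) :
    ((∃ r : ℝ, ∀ k, 1 ≤ k → lam (k + 1) = r * lam k) ↔
      ∀ i j : Fin n, 0 < (1 - ϑ i) ^ 2 * H i → 0 < (1 - ϑ j) ^ 2 * H j → ϑ i = ϑ j) ∧
    (∀ i j : Fin n, ϑ i ∈ Set.Ioo (0 : ℝ) 1 → ϑ j ∈ Set.Ioo (0 : ℝ) 1 → ϑ i ≠ ϑ j →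
      ¬∃ r : ℝ, ∀ k, 1 ≤ k → lam (k + 1) = r * lam k) := by
  have hnpos : 0 < n := lt_of_lt_of_le two_pos hn
  have i0 : Fin n := ⟨0, hnpos⟩
  have ha : ∀ i, 0 < (1 - ϑ i) ^ 2 * H i := fun i =>
    mul_pos (pow_pos (by have := (hϑ i).2; linarith) 2) (hH i)
  have hD : 0 < ∑ i, (1 - ϑ i) * H i := by
    apply Finset.sum_pos
    · intro i _
      exact mul_pos (by have := (hϑ i).2; linarith) (hH i)
    · exact ⟨i0, Finset.mem_univ i0⟩
  have main : (∃ r : ℝ, ∀ k, 1 ≤ k → lam (k + 1) = r * lam k) ↔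
      ∀ i j : Fin n, 0 < (1 - ϑ i) ^ 2 * H i → 0 < (1 - ϑ j) ^ 2 * H j → ϑ i = ϑ j := by
    constructor
    · rintro ⟨r, hr⟩ i j _ _
      set f : Fin n → ℝ := fun i => (1 - ϑ i) ^ 2 * H i with hf
      set T : ℕ → ℝ := fun m => ∑ i, (1 - ϑ i) ^ 2 * ϑ i ^ m * H i with hT
      have hT0 : lam 1 = T 0 / (∑ i, (1 - ϑ i) * H i) := hlam 1 le_rfl
      have hT1 : lam 2 = T 1 / (∑ i, (1 - ϑ i) * H i) := hlam 2 (by norm_num)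
      have hT2 : lam 3 = T 2 / (∑ i, (1 - ϑ i) * H i) := hlam 3 (by norm_num)
      have e1 : T 1 = r * T 0 := by
        have h := hr 1 le_rfl
        rw [show (1:ℕ)+1 = 2 from rfl, hT1, hT0] at h
        field_simp at h
        linarith
      have e2 : T 2 = r * T 1 := by
        have h := hr 2 (by norm_num)
        rw [show (2:ℕ)+1 = 3 from rfl, hT2, hT1] at h
        field_simp at h
        linarith
      have key : (∑ p : Fin n, ∑ q : Fin n, f p * f q * (ϑ p - ϑ q) ^ 2)
          = 2 * (T 0 * T 2 - T 1 ^ 2) := by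
        have e : ∀ p, ∑ q, f p * f q * (ϑ p - ϑ q) ^ 2
            = f p * ϑ p ^ 2 * T 0 + f p * T 2 - f p * ϑ p * (2 * T 1) := by
          intro p
          simp only [hT, Finset.mul_sum]
          rw [← Finset.sum_add_distrib, ← Finset.sum_sub_distrib]
          exact Finset.sum_congr rfl fun q _ => by simp only [hf]; ring
        rw [Finset.sum_congr rfl fun p _ => e p]
        have h1 : ∑ p, (f p * ϑ p ^ 2 * T 0 + f p * T 2 - f p * ϑ p * (2 * T 1))
            = (∑ p, f p * ϑ p ^ 2) * T 0 + (∑ p, f p) * T 2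
              - (∑ p, f p * ϑ p) * (2 * T 1) := by
          rw [Finset.sum_mul, Finset.sum_mul, Finset.sum_mul, ← Finset.sum_add_distrib,
            ← Finset.sum_sub_distrib]
        rw [h1]
        have c2 : (∑ p, f p * ϑ p ^ 2) = T 2 :=
          Finset.sum_congr rfl fun p _ => by simp only [hf, hT]; ring
        have c0 : (∑ p, f p) = T 0 :=
          Finset.sum_congr rfl fun p _ => by simp only [hf, hT]; ring
        have c1 : (∑ p, f p * ϑ p) = T 1 :=
          Finset.sum_congr rfl fun p _ => by simp only [hf, hT]; ring
        rw [c0, c1, c2]; ring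
      have hzero : (∑ p : Fin n, ∑ q : Fin n, f p * f q * (ϑ p - ϑ q) ^ 2) = 0 := by
        rw [key, e2, e1]; ring
      have hnn : ∀ p ∈ Finset.univ, (0:ℝ) ≤ ∑ q : Fin n, f p * f q * (ϑ p - ϑ q) ^ 2 :=
        fun p _ => Finset.sum_nonneg fun q _ =>
          mul_nonneg (mul_nonneg (ha p).le (ha q).le) (sq_nonneg _)
      have hi := (Finset.sum_eq_zero_iff_of_nonneg hnn).1 hzero i (Finset.mem_univ i)
      have hnn2 : ∀ q ∈ Finset.univ, (0:ℝ) ≤ f i * f q * (ϑ i - ϑ q) ^ 2 :=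
        fun q _ => mul_nonneg (mul_nonneg (ha i).le (ha q).le) (sq_nonneg _)
      have hij := (Finset.sum_eq_zero_iff_of_nonneg hnn2).1 hi j (Finset.mem_univ j)
      have hposij := mul_pos (ha i) (ha j)
      have hsq : (ϑ i - ϑ j) ^ 2 = 0 := by
        simp only [hf] at hij
        by_contra hne
        have hgt : 0 < (ϑ i - ϑ j) ^ 2 := lt_of_le_of_ne (sq_nonneg _) (Ne.symm hne)
        nlinarith [mul_pos hposij hgt]
      have := pow_eq_zero_iff (two_ne_zero) |>.1 hsq
      linarith [sub_eq_zero.1 this]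
    · intro hall
      refine ⟨ϑ i0, fun k hk => ?_⟩
      obtain ⟨m, rfl⟩ := Nat.exists_eq_add_of_le hk
      rw [hlam (1 + m + 1) (by omega), hlam (1 + m) (by omega)]
      have h1 : 1 + m + 1 - 1 = m + 1 := by omega
      have h2 : 1 + m - 1 = m := by omega
      rw [h1, h2, mul_div_assoc']
      congr 1
      rw [Finset.mul_sum]
      refine Finset.sum_congr rfl fun i _ => ?_
      have : ϑ i = ϑ i0 := hall i i0 (ha i) (ha i0)
      rw [← this, pow_succ]; ring
  refine ⟨main, fun i j hi hj hne hgeo => hne (main.1 hgeo i j (ha i) (ha j))⟩
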